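/- Let γ ∈ (0,1) and α > 0. Let Φ : [0,∞) → ℝ be a nonincreasing, nonnegative function with ∫_{1/2}^∞ Φ(t)^γ dt < ∞, and let g ∈ L¹(ℝ, ℂ) satisfy ∫_ℝ (ln(1 + |u|))^α |g(u)| du < ∞. Suppose δ(x) = (1/2π) ∫_ℝ e^{ixu} g(u) du satisfies |δ(x)| ≤ Φ(|x|) for all x ∈ ℝ, and set δ_{jk}(x) = 2^{j/2} δ(2^j x − k), R_{0α} = (1/π) ∫_ℝ (ln(e^α + |u|/2))^α |g(u)| du, R_{1α} = (1/π) ∫_ℝ (ln(e^α + |u| + 1))^α |g(u)| du, and M = 3Φ(0)^γ + 4∫_{1/2}^∞ Φ(t)^γ dt. Then for all x ≠ y: Σ_{k∈ℤ} |δ_{0k}(x) − δ_{0k}(y)| ≤ 2 R_{0α}^{1−γ} M · (ln(e^α + 1/|x − y|))^{−α(1−γ)}, and for every integer j ≥ 1: Σ_{k∈ℤ} |δ_{jk}(x) − δ_{jk}(y)| ≤ 2^{j/2+1} j^{α(1−γ)} R_{1α}^{1−γ} M · (ln(e^α + 1/|x − y|))^{−α(1−γ)}. -/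

import Mathlib

open MeasureTheory Real

lemma norm_exp_I_sub_one_le (θ : ℝ) : ‖Complex.exp ((θ:ℂ) * Complex.I) - 1‖ ≤ |θ| := by
  have h2 : ‖Complex.exp ((θ:ℂ) * Complex.I) - 1‖ = |2 * Real.sin (θ/2)| := by
    rw [← Real.sqrt_sq_eq_abs]
    rw [show ‖Complex.exp ((θ:ℂ) * Complex.I) - 1‖
        = Real.sqrt (Complex.normSq (Complex.exp ((θ:ℂ) * Complex.I) - 1)) from rfl]
    congr 1
    rw [Complex.normSq_apply]
    simp only [Complex.sub_re, Complex.sub_im, Complex.exp_ofReal_mul_I_re,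
      Complex.exp_ofReal_mul_I_im, Complex.one_re, Complex.one_im]
    have hc : Real.cos (θ/2) ^ 2 = 1/2 + Real.cos θ / 2 := by
      have := Real.cos_sq (θ/2); rwa [show 2*(θ/2) = θ by ring] at this
    nlinarith [Real.sin_sq_add_cos_sq θ, Real.sin_sq_add_cos_sq (θ/2)]
  rw [h2, abs_mul, abs_two]
  calc 2 * |Real.sin (θ/2)| ≤ 2 * |θ/2| :=
        mul_le_mul_of_nonneg_left Real.abs_sin_le_abs (by norm_num)
    _ = |θ| := by rw [abs_div]; ring_nf

lemma rpow_add_le' {a b γ : ℝ} (ha : 0 ≤ a) (hb : 0 ≤ b) (h0 : 0 ≤ γ) (h1 : γ ≤ 1) :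
    (a + b) ^ γ ≤ a ^ γ + b ^ γ := by
  lift a to NNReal using ha
  lift b to NNReal using hb
  have := NNReal.rpow_add_le_add_rpow a b h0 h1
  exact_mod_cast this

lemma log_ge_alpha {α : ℝ} (hα : 0 < α) {t : ℝ} (ht : 0 ≤ t) :
    α ≤ Real.log (Real.exp α + t) := by
  nth_rewrite 1 [← Real.log_exp α]
  exact Real.log_le_log (Real.exp_pos α) (by linarith)

lemma mono_f {α : ℝ} (hα : 0 < α) {a b : ℝ} (ha : 0 ≤ a) (hab : a ≤ b) :
    a * Real.log (Real.exp α + b) ^ α ≤ b * Real.log (Real.exp α + a) ^ α := by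
  rcases eq_or_lt_of_le ha with rfl | hapos
  · have : (0:ℝ) ≤ Real.log (Real.exp α + 0) ^ α :=
      Real.rpow_nonneg (le_trans hα.le (log_ge_alpha hα le_rfl)) α
    nlinarith [Real.rpow_nonneg (le_trans hα.le (log_ge_alpha hα (le_trans ha hab))) α]
  · have hb : 0 < b := lt_of_lt_of_le hapos hab
    set L := Real.log (Real.exp α + a) with hL
    have hLα : α ≤ L := log_ge_alpha hα ha
    have hLpos : 0 < L := lt_of_lt_of_le hα hLα
    set c := Real.log (b / a) with hc
    have hcnn : 0 ≤ c := Real.log_nonneg ((one_le_div hapos).mpr hab)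
    have hec : Real.exp c = b / a := Real.exp_log (div_pos hb hapos)
    have key1 : Real.log (Real.exp α + b) ≤ L + c := by
      have h1 : Real.exp α + b ≤ (Real.exp α + a) * (b / a) := by
        have : 1 ≤ b / a := (one_le_div hapos).mpr hab
        have h2 : Real.exp α ≤ Real.exp α * (b / a) := le_mul_of_one_le_right (Real.exp_pos α).le this
        have h3 : a * (b / a) = b := by field_simp
        nlinarith
      calc Real.log (Real.exp α + b) ≤ Real.log ((Real.exp α + a) * (b / a)) :=
            Real.log_le_log (by positivity) h1
        _ = L + c := Real.log_mul (by positivity) (by positivity)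
    have key2 : (L + c) ^ α ≤ (b / a) * L ^ α := by
      have hfrac : 1 + c / L ≤ Real.exp (c / α) := by
        calc 1 + c / L ≤ 1 + c / α := by
              have : c / L ≤ c / α := div_le_div_of_nonneg_left hcnn hα hLα
              linarith
          _ ≤ Real.exp (c / α) := Real.add_one_le_exp (c / α) |>.trans_eq' (by ring_nf)
      have hsplit : L + c = L * (1 + c / L) := by field_simp
      calc (L + c) ^ α = L ^ α * (1 + c / L) ^ α := by
            rw [hsplit, Real.mul_rpow hLpos.le (by positivity)]
        _ ≤ L ^ α * Real.exp (c / α) ^ α :=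
            mul_le_mul_of_nonneg_left
              (Real.rpow_le_rpow (by positivity) hfrac hα.le)
              (Real.rpow_nonneg hLpos.le α)
        _ = L ^ α * (b / a) := by
            rw [← Real.exp_mul, div_mul_cancel₀ c hα.ne', hec]
        _ = (b / a) * L ^ α := by ring
    calc a * Real.log (Real.exp α + b) ^ α ≤ a * (L + c) ^ α := by
          apply mul_le_mul_of_nonneg_left _ ha
          exact Real.rpow_le_rpow (le_trans hα.le (log_ge_alpha hα (le_trans ha hab))) key1 hα.le
      _ ≤ a * ((b / a) * L ^ α) := mul_le_mul_of_nonneg_left key2 ha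
      _ = b * L ^ α := by field_simp


section minbounds
variable {α h : ℝ} (hα : 0 < α) (hh : 0 < h)

lemma min_bound_zero (hα : 0 < α) (hh : 0 < h) (u : ℝ) :
    min 2 (h * |u|) ≤
      2 * Real.log (Real.exp α + |u| / 2) ^ α * Real.log (Real.exp α + 1 / h) ^ (-α) := by
  set L := Real.log (Real.exp α + 1 / h) with hLdef
  have hLα : α ≤ L := log_ge_alpha hα (by positivity)
  have hLpos : 0 < L := lt_of_lt_of_le hα hLα
  set J := Real.log (Real.exp α + |u| / 2) ^ α with hJdef
  have hJnn : 0 ≤ J := Real.rpow_nonneg (le_trans hα.le (log_ge_alpha hα (by positivity))) α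
  have hP : (0:ℝ) < L ^ α := Real.rpow_pos_of_pos hLpos α
  rw [Real.rpow_neg hLpos.le]
  rcases le_or_gt 2 (h * |u|) with hcase | hcase
  · rw [min_eq_left hcase]
    have h1 : 1 / h ≤ |u| / 2 := by rw [div_le_div_iff₀ hh (by norm_num)]; linarith
    have h2 : L ^ α ≤ J := by
      apply Real.rpow_le_rpow hLpos.le _ hα.le
      exact Real.log_le_log (by positivity) (by linarith)
    calc (2:ℝ) = 2 * (L ^ α) * (L ^ α)⁻¹ := by field_simp
      _ ≤ 2 * J * (L ^ α)⁻¹ := by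
          apply mul_le_mul_of_nonneg_right _ (by positivity)
          linarith
  · have hmin : min 2 (h * |u|) ≤ h * |u| := min_le_right _ _
    have key : (|u| / 2) * L ^ α ≤ (1 / h) * J := by
      have := mono_f hα (a := |u| / 2) (b := 1 / h) (by positivity) (by
        rw [div_le_div_iff₀ (by norm_num) hh]; linarith)
      simpa [hLdef, hJdef] using this
    have h2 : h * (|u| / 2) * L ^ α ≤ J := by
      calc h * (|u| / 2) * L ^ α = h * ((|u| / 2) * L ^ α) := by ring
        _ ≤ h * ((1 / h) * J) := mul_le_mul_of_nonneg_left key hh.le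
        _ = J := by field_simp
    calc min 2 (h * |u|) ≤ h * |u| := hmin
      _ = 2 * (h * (|u| / 2) * L ^ α) * (L ^ α)⁻¹ := by
          field_simp
      _ ≤ 2 * J * (L ^ α)⁻¹ := by
          apply mul_le_mul_of_nonneg_right _ (by positivity)
          apply mul_le_mul_of_nonneg_left h2 (by norm_num)

lemma log_pow_bound (hα : 0 < α) (n : ℕ) {t : ℝ} (ht : 0 ≤ t) :
    Real.log (Real.exp α + 2 ^ n * t) ≤ (n + 1 : ℝ) * Real.log (Real.exp α + t + 1) := by
  have he : (1:ℝ) ≤ Real.exp α := Real.one_le_exp hα.le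
  have hlog1 : Real.log 2 ≤ Real.log (Real.exp α + t + 1) :=
    Real.log_le_log (by norm_num) (by linarith)
  have hlog2 : Real.log (Real.exp α + t) ≤ Real.log (Real.exp α + t + 1) :=
    Real.log_le_log (by positivity) (by linarith)
  have hlog1nn : (0:ℝ) ≤ Real.log (Real.exp α + t + 1) :=
    le_trans (Real.log_nonneg (by norm_num)) hlog1
  have h1 : Real.exp α + 2 ^ n * t ≤ 2 ^ n * (Real.exp α + t) := by
    have h2n : (1:ℝ) ≤ 2 ^ n := one_le_pow₀ (by norm_num)
    nlinarith
  calc Real.log (Real.exp α + 2 ^ n * t)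
      ≤ Real.log (2 ^ n * (Real.exp α + t)) := Real.log_le_log (by positivity) h1
    _ = n * Real.log 2 + Real.log (Real.exp α + t) := by
        rw [Real.log_mul (by positivity) (by positivity), Real.log_pow]
    _ ≤ n * Real.log (Real.exp α + t + 1) + Real.log (Real.exp α + t + 1) := by
        have : (n:ℝ) * Real.log 2 ≤ n * Real.log (Real.exp α + t + 1) :=
          mul_le_mul_of_nonneg_left hlog1 (Nat.cast_nonneg n)
        linarith
    _ = (n + 1 : ℝ) * Real.log (Real.exp α + t + 1) := by ring

lemma min_bound_j (hα : 0 < α) (hh : 0 < h) (j : ℕ) (hj : 1 ≤ j) (u : ℝ) :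
    min 2 ((2 ^ j * h) * |u|) ≤
      2 * (j : ℝ) ^ α * Real.log (Real.exp α + |u| + 1) ^ α
        * Real.log (Real.exp α + 1 / h) ^ (-α) := by
  obtain ⟨n, rfl⟩ : ∃ n, j = n + 1 := ⟨j - 1, (Nat.succ_pred_eq_of_pos hj).symm⟩
  set L := Real.log (Real.exp α + 1 / h) with hLdef
  have hLα : α ≤ L := log_ge_alpha hα (by positivity)
  have hLpos : 0 < L := lt_of_lt_of_le hα hLα
  have hP : (0:ℝ) < L ^ α := Real.rpow_pos_of_pos hLpos α
  set L1 := Real.log (Real.exp α + |u| + 1) with hL1def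
  have hL1nn : 0 ≤ L1 := by
    apply Real.log_nonneg
    nlinarith [Real.add_one_le_exp α, abs_nonneg u]
  have hjR : (0:ℝ) ≤ ((n:ℝ) + 1) := by positivity
  have hkey : Real.log (Real.exp α + 2 ^ n * |u|) ≤ ((n:ℝ) + 1) * L1 :=
    log_pow_bound hα n (abs_nonneg u)
  have hcast : ((n + 1 : ℕ) : ℝ) = (n:ℝ) + 1 := by push_cast; ring
  set Q := ((n + 1 : ℕ) : ℝ) ^ α * L1 ^ α with hQdef
  have hQnn : 0 ≤ Q := by positivity
  have hQge : Real.log (Real.exp α + 2 ^ n * |u|) ^ α ≤ Q := by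
    calc Real.log (Real.exp α + 2 ^ n * |u|) ^ α ≤ (((n:ℝ) + 1) * L1) ^ α := by
          apply Real.rpow_le_rpow _ hkey hα.le
          exact le_trans hα.le (log_ge_alpha hα (by positivity))
      _ = Q := by rw [Real.mul_rpow hjR hL1nn, hQdef, hcast]
  rw [Real.rpow_neg hLpos.le]
  rcases le_or_gt 2 ((2 ^ (n+1) * h) * |u|) with hcase | hcase
  · rw [min_eq_left hcase]
    have h1 : 1 / h ≤ 2 ^ n * |u| := by
      rw [div_le_iff₀ hh]
      rw [pow_succ] at hcase
      nlinarith
    have h2 : L ^ α ≤ Q := by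
      refine le_trans (Real.rpow_le_rpow hLpos.le ?_ hα.le) hQge
      exact Real.log_le_log (by positivity) (by linarith)
    calc (2:ℝ) = 2 * (L ^ α) * (L ^ α)⁻¹ := by field_simp
      _ ≤ 2 * Q * (L ^ α)⁻¹ := by
          apply mul_le_mul_of_nonneg_right _ (by positivity)
          linarith
      _ = 2 * ((n + 1 : ℕ) : ℝ) ^ α * L1 ^ α * (L ^ α)⁻¹ := by ring
  · have key : (2 ^ n * |u|) * L ^ α ≤ (1 / h) * Q := by
      have hm := mono_f hα (a := 2 ^ n * |u|) (b := 1 / h) (by positivity) (by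
        rw [le_div_iff₀ hh]
        rw [pow_succ] at hcase
        nlinarith)
      refine le_trans hm ?_
      apply mul_le_mul_of_nonneg_left _ (by positivity)
      exact hQge
    have h2 : h * (2 ^ n * |u|) * L ^ α ≤ Q := by
      calc h * (2 ^ n * |u|) * L ^ α = h * ((2 ^ n * |u|) * L ^ α) := by ring
        _ ≤ h * ((1 / h) * Q) := mul_le_mul_of_nonneg_left key hh.le
        _ = Q := by field_simp
    calc min 2 ((2 ^ (n+1) * h) * |u|) ≤ (2 ^ (n+1) * h) * |u| := min_le_right _ _
      _ = 2 * (h * (2 ^ n * |u|) * L ^ α) * (L ^ α)⁻¹ := by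
          field_simp
          ring
      _ ≤ 2 * Q * (L ^ α)⁻¹ := by
          apply mul_le_mul_of_nonneg_right _ (by positivity)
          apply mul_le_mul_of_nonneg_left h2 (by norm_num)
      _ = 2 * ((n + 1 : ℕ) : ℝ) ^ α * L1 ^ α * (L ^ α)⁻¹ := by ring

end minbounds

section sums
variable {ψ : ℝ → ℝ}

lemma nat_tail (hanti : AntitoneOn ψ (Set.Ici (0:ℝ)))
    (hnn : ∀ t ∈ Set.Ici (0:ℝ), 0 ≤ ψ t)
    (hint : IntegrableOn ψ (Set.Ioi (1/2 : ℝ)))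
    {c : ℝ} (hc : 0 ≤ c) :
    Summable (fun n : ℕ => ψ (c + n)) ∧
      ∑' n : ℕ, ψ (c + n) ≤ ψ 0 + 2 * ∫ t in Set.Ioi (1/2 : ℝ), ψ t := by
  have hnn' : ∀ n : ℕ, 0 ≤ ψ (c + n) :=
    fun n => hnn _ (Set.mem_Ici.mpr (add_nonneg hc (Nat.cast_nonneg n)))
  have hInonneg : 0 ≤ ∫ t in Set.Ioi (1/2 : ℝ), ψ t :=
    setIntegral_nonneg measurableSet_Ioi (fun t ht => hnn t (le_of_lt (show (0:ℝ) < t by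
      simp only [Set.mem_Ioi] at ht; linarith)))
  set I : ℕ → Set ℝ := fun n => Set.Ioc (c + n + 1/2) (c + n + 1) with hI
  have hsub : ∀ n : ℕ, I n ⊆ Set.Ioi (1/2 : ℝ) := by
    intro n t ht
    simp only [hI, Set.mem_Ioc] at ht
    simp only [Set.mem_Ioi]
    have : (0:ℝ) ≤ (n:ℝ) := Nat.cast_nonneg n
    linarith [ht.1]
  have hterm : ∀ n : ℕ, ψ (c + (n+1)) ≤ 2 * ∫ t in I n, ψ t := by
    intro n
    have hints : IntegrableOn ψ (I n) := hint.mono_set (hsub n)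
    have hmono : ∀ t ∈ I n, ψ (c + (n+1)) ≤ ψ t := by
      intro t ht
      simp only [hI, Set.mem_Ioc] at ht
      have h0n : (0:ℝ) ≤ (n:ℝ) := Nat.cast_nonneg n
      apply hanti (Set.mem_Ici.mpr (by linarith [ht.1])) (Set.mem_Ici.mpr (by positivity))
      push_cast
      linarith [ht.2]
    have hconst : ∫ t in I n, (fun _ => ψ (c + (n+1))) t = ψ (c + (n+1)) * (1/2) := by
      rw [setIntegral_const]
      simp only [hI, Real.volume_Ioc, smul_eq_mul]
      rw [Real.volume_real_Ioc, max_eq_left (by linarith)]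
      ring_nf
    have hle : ψ (c + (n+1)) * (1/2) ≤ ∫ t in I n, ψ t := by
      rw [← hconst]
      apply setIntegral_mono_on (integrableOn_const measure_Ioc_lt_top.ne)
        hints measurableSet_Ioc hmono
    linarith
  have hsumI : ∀ N : ℕ, ∑ n ∈ Finset.range N, (∫ t in I n, ψ t) ≤
      ∫ t in Set.Ioi (1/2 : ℝ), ψ t := by
    intro N
    have hd : (Finset.range N : Set ℕ).Pairwise (Function.onFun Disjoint I) := by
      intro m _ n _ hmn
      unfold Function.onFun
      simp only [hI]
      rw [Set.Ioc_disjoint_Ioc]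
      rcases lt_or_gt_of_ne hmn with h | h
      · have : (m:ℝ) + 1 ≤ (n:ℝ) := by exact_mod_cast Nat.succ_le_of_lt h
        refine le_trans (min_le_left _ _) (le_trans ?_ (le_max_right _ _))
        linarith
      · have : (n:ℝ) + 1 ≤ (m:ℝ) := by exact_mod_cast Nat.succ_le_of_lt h
        refine le_trans (min_le_right _ _) (le_trans ?_ (le_max_left _ _))
        linarith
    rw [← integral_biUnion_finset (Finset.range N) (fun n _ => measurableSet_Ioc)
      hd (fun n _ => hint.mono_set (hsub n))]
    apply setIntegral_mono_set hint
    · filter_upwards [ae_restrict_mem measurableSet_Ioi] with t ht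
      exact hnn t (le_of_lt (lt_trans (by norm_num) (Set.mem_Ioi.mp ht)))
    · apply HasSubset.Subset.eventuallyLE
      exact Set.iUnion₂_subset (fun n _ => hsub n)
  have hpartial : ∀ N : ℕ, ∑ n ∈ Finset.range N, ψ (c + n) ≤
      ψ 0 + 2 * ∫ t in Set.Ioi (1/2 : ℝ), ψ t := by
    intro N
    cases N with
    | zero =>
      simp only [Finset.range_zero, Finset.sum_empty]
      have := hnn 0 (Set.mem_Ici.mpr le_rfl)
      linarith
    | succ m =>
      rw [Finset.sum_range_succ']
      push_cast
      simp only [add_zero]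
      have h0 : ψ c ≤ ψ 0 := hanti (Set.mem_Ici.mpr le_rfl) (Set.mem_Ici.mpr hc) hc
      have htail : ∑ n ∈ Finset.range m, ψ (c + ((n:ℝ)+1)) ≤
          2 * ∫ t in Set.Ioi (1/2 : ℝ), ψ t := by
        calc ∑ n ∈ Finset.range m, ψ (c + ((n:ℝ)+1))
            ≤ ∑ n ∈ Finset.range m, 2 * ∫ t in I n, ψ t := by
              apply Finset.sum_le_sum
              intro n _
              exact hterm n
          _ = 2 * ∑ n ∈ Finset.range m, ∫ t in I n, ψ t := by rw [Finset.mul_sum]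
          _ ≤ 2 * ∫ t in Set.Ioi (1/2 : ℝ), ψ t := by linarith [hsumI m]
      linarith
  constructor
  · exact summable_of_sum_range_le hnn' hpartial
  · exact tsum_le_of_sum_range_le hnn' hpartial

lemma int_sum (hanti : AntitoneOn ψ (Set.Ici (0:ℝ)))
    (hnn : ∀ t ∈ Set.Ici (0:ℝ), 0 ≤ ψ t)
    (hint : IntegrableOn ψ (Set.Ioi (1/2 : ℝ)))
    (x : ℝ) :
    Summable (fun k : ℤ => ψ |x - k|) ∧
      ∑' k : ℤ, ψ |x - k| ≤ 2 * ψ 0 + 4 * ∫ t in Set.Ioi (1/2 : ℝ), ψ t := by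
  set m : ℤ := ⌊x⌋ with hm
  set s : ℝ := x - m with hs
  have hs0 : 0 ≤ s := by simp [hs, hm, Int.floor_le]
  have hs1 : s < 1 := by
    have := Int.lt_floor_add_one x
    simp only [hs, hm]
    push_cast
    linarith
  set G : ℤ → ℝ := fun k => ψ |x - (m - k)| with hG
  have e1 : (fun n : ℕ => G n) = fun n : ℕ => ψ (s + n) := by
    funext n
    simp only [hG]
    congr 1
    rw [abs_of_nonneg]
    · push_cast; ring
    · push_cast
      have : (0:ℝ) ≤ (n:ℝ) := Nat.cast_nonneg n
      linarith
  have e2 : (fun n : ℕ => G (-(n+1))) = fun n : ℕ => ψ ((1 - s) + n) := by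
    funext n
    simp only [hG]
    congr 1
    rw [abs_of_nonpos]
    · push_cast; ring
    · push_cast
      have : (0:ℝ) ≤ (n:ℝ) := Nat.cast_nonneg n
      linarith
  obtain ⟨hsum1, hle1⟩ := nat_tail hanti hnn hint hs0
  obtain ⟨hsum2, hle2⟩ := nat_tail hanti hnn hint (c := 1 - s) (by linarith)
  have hsum1' : Summable (fun n : ℕ => G n) := by rw [e1]; exact hsum1
  have hsum2' : Summable (fun n : ℕ => G (-(n+1))) := by rw [e2]; exact hsum2
  have hsumG : Summable G := Summable.of_nat_of_neg_add_one hsum1' hsum2'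
  have htsumG : ∑' k : ℤ, G k ≤ 2 * ψ 0 + 4 * ∫ t in Set.Ioi (1/2 : ℝ), ψ t := by
    rw [tsum_of_nat_of_neg_add_one hsum1' hsum2', e1, e2]
    linarith
  have hcomp : G = (fun k : ℤ => ψ |x - k|) ∘ (Equiv.subLeft m) := by
    funext k; simp [hG, Equiv.subLeft]
  constructor
  · rw [← (Equiv.subLeft m).summable_iff]
    rw [← hcomp]; exact hsumG
  · rw [← (Equiv.subLeft m).tsum_eq (fun k : ℤ => ψ |x - k|)]
    calc ∑' k : ℤ, ψ |x - (Equiv.subLeft m) k| = ∑' k, G k := by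
          apply tsum_congr; intro k; simp [hG, Equiv.subLeft]
      _ ≤ _ := htsumG

end sums

section osc
variable {g : ℝ → ℂ} {δ : ℝ → ℂ}

lemma exp_mul_integrable (hg : Integrable g) (x : ℝ) :
    Integrable (fun u : ℝ => Complex.exp (Complex.I * x * u) * g u) := by
  have hcont : Continuous (fun u : ℝ => Complex.exp (Complex.I * x * u)) := by
    apply Complex.continuous_exp.comp
    continuity
  apply Integrable.bdd_mul (c := 1) hg hcont.aestronglyMeasurable
  refine Filter.Eventually.of_forall (fun u => ?_)
  rw [Complex.norm_exp]
  simp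

lemma norm_exp_diff_le (x y u : ℝ) :
    ‖Complex.exp (Complex.I * x * u) - Complex.exp (Complex.I * y * u)‖ ≤
      min 2 (|x - y| * |u|) := by
  apply le_min
  · calc ‖Complex.exp (Complex.I * x * u) - Complex.exp (Complex.I * y * u)‖
        ≤ ‖Complex.exp (Complex.I * x * u)‖ + ‖Complex.exp (Complex.I * y * u)‖ :=
          norm_sub_le _ _
      _ = 2 := by
          rw [Complex.norm_exp, Complex.norm_exp]
          simp
          norm_num
  · have hfact : Complex.exp (Complex.I * x * u) - Complex.exp (Complex.I * y * u) =
        Complex.exp (Complex.I * y * u) *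
          (Complex.exp ((((x - y) * u : ℝ) : ℂ) * Complex.I) - 1) := by
      rw [mul_sub, ← Complex.exp_add, mul_one]
      congr 2
      push_cast
      ring
    rw [hfact, norm_mul]
    have h1 : ‖Complex.exp (Complex.I * y * u)‖ = 1 := by
      rw [Complex.norm_exp]; simp
    rw [h1, one_mul]
    calc ‖Complex.exp ((((x - y) * u : ℝ) : ℂ) * Complex.I) - 1‖ ≤ |(x - y) * u| :=
          norm_exp_I_sub_one_le _
      _ = |x - y| * |u| := abs_mul _ _

lemma osc_bound (hg : Integrable g)
    (hδ : ∀ x : ℝ, δ x =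
      (1 / (2 * (Real.pi : ℂ))) * ∫ u : ℝ, Complex.exp (Complex.I * x * u) * g u)
    (x y : ℝ) (W : ℝ → ℝ) (hWnn : ∀ u, 0 ≤ W u)
    (hWint : Integrable (fun u : ℝ => W u * ‖g u‖))
    (hWmin : ∀ u, min 2 (|x - y| * |u|) ≤ W u) :
    ‖δ x - δ y‖ ≤ (1 / (2 * Real.pi)) * ∫ u : ℝ, W u * ‖g u‖ := by
  have hdiff : δ x - δ y = (1 / (2 * (Real.pi : ℂ))) *
      ∫ u : ℝ, (Complex.exp (Complex.I * x * u) - Complex.exp (Complex.I * y * u)) * g u := by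
    rw [hδ x, hδ y, ← mul_sub, ← integral_sub (exp_mul_integrable hg x) (exp_mul_integrable hg y)]
    congr 1
    apply integral_congr_ae
    filter_upwards with u
    ring
  rw [hdiff, norm_mul]
  have hnc : ‖(1 / (2 * (Real.pi : ℂ)))‖ = 1 / (2 * Real.pi) := by
    rw [show (2 * (Real.pi : ℂ)) = ((2 * Real.pi : ℝ) : ℂ) by push_cast; ring]
    rw [norm_div, norm_one, Complex.norm_real]
    rw [Real.norm_eq_abs, abs_of_pos (by positivity)]
  rw [hnc]
  apply mul_le_mul_of_nonneg_left _ (by positivity)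
  calc ‖∫ u : ℝ, (Complex.exp (Complex.I * x * u) - Complex.exp (Complex.I * y * u)) * g u‖
      ≤ ∫ u : ℝ, ‖(Complex.exp (Complex.I * x * u) - Complex.exp (Complex.I * y * u)) * g u‖ :=
        norm_integral_le_integral_norm _
    _ ≤ ∫ u : ℝ, W u * ‖g u‖ := by
        apply integral_mono_of_nonneg
        · filter_upwards with u; positivity
        · exact hWint
        · filter_upwards with u
          rw [norm_mul]
          exact mul_le_mul_of_nonneg_right
            ((norm_exp_diff_le x y u).trans (hWmin u)) (norm_nonneg _)

end osc

section intlog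
variable {α : ℝ} {g : ℝ → ℂ}

lemma integrable_pow_log (hα : 0 < α) (hg : Integrable g)
    (hglog : Integrable (fun u : ℝ => Real.log (1 + |u|) ^ α * ‖g u‖))
    {J : ℝ → ℝ} (hJcont : Continuous J) (hJnn : ∀ u, 0 ≤ J u)
    {C : ℝ} (hC : 0 ≤ C) (hJle : ∀ u, J u ≤ C + Real.log (1 + |u|)) :
    Integrable (fun u : ℝ => J u ^ α * ‖g u‖) := by
  apply Integrable.mono'
    ((hg.norm.const_mul ((2:ℝ) ^ α * C ^ α)).add (hglog.const_mul ((2:ℝ) ^ α)))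
  · exact ((hJcont.rpow_const (fun u => Or.inr hα.le)).aestronglyMeasurable.mul hg.1.norm)
  · filter_upwards with u
    have hLnn : 0 ≤ Real.log (1 + |u|) := Real.log_nonneg (by simp [abs_nonneg])
    set L := Real.log (1 + |u|) with hL
    have key : J u ^ α ≤ 2 ^ α * C ^ α + 2 ^ α * L ^ α := by
      have h1 : J u ^ α ≤ (C + L) ^ α :=
        Real.rpow_le_rpow (hJnn u) (hJle u) hα.le
      have h2 : (C + L) ^ α ≤ (2 * max C L) ^ α := by
        apply Real.rpow_le_rpow (by positivity) _ hα.le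
        rcases le_total C L with h | h
        · calc C + L ≤ L + L := by linarith
            _ = 2 * L := by ring
            _ ≤ 2 * max C L := by nlinarith [le_max_right C L]
        · calc C + L ≤ C + C := by linarith
            _ = 2 * C := by ring
            _ ≤ 2 * max C L := by nlinarith [le_max_left C L]
      have h3 : (2 * max C L) ^ α = 2 ^ α * (max C L) ^ α :=
        Real.mul_rpow (by norm_num) (le_max_of_le_left hC)
      have h4 : (max C L) ^ α ≤ C ^ α + L ^ α := by
        rcases max_cases C L with ⟨he, _⟩ | ⟨he, _⟩ <;> rw [he]
        · nlinarith [Real.rpow_nonneg hLnn α]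
        · nlinarith [Real.rpow_nonneg hC α]
      calc J u ^ α ≤ (2 * max C L) ^ α := le_trans h1 h2
        _ = 2 ^ α * (max C L) ^ α := h3
        _ ≤ 2 ^ α * (C ^ α + L ^ α) := by
            apply mul_le_mul_of_nonneg_left h4 (Real.rpow_nonneg (by norm_num) α)
        _ = 2 ^ α * C ^ α + 2 ^ α * L ^ α := by ring
      
    rw [Real.norm_eq_abs, abs_of_nonneg (mul_nonneg (Real.rpow_nonneg (hJnn u) α) (norm_nonneg _))]
    have := mul_le_mul_of_nonneg_right key (norm_nonneg (g u))
    calc J u ^ α * ‖g u‖ ≤ (2 ^ α * C ^ α + 2 ^ α * L ^ α) * ‖g u‖ := this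
      _ = 2 ^ α * C ^ α * ‖g u‖ + 2 ^ α * (L ^ α * ‖g u‖) := by ring

lemma continuous_log_comp {f : ℝ → ℝ} (hf : Continuous f) (hpos : ∀ u, 0 < f u) :
    Continuous fun u => Real.log (f u) := by
  rw [continuous_iff_continuousAt]
  intro u
  exact (Real.continuousAt_log (ne_of_gt (hpos u))).comp hf.continuousAt

end intlog

lemma core_sum {γ : ℝ} (hγ : γ ∈ Set.Ioo (0:ℝ) 1) {Φ : ℝ → ℝ}
    (hΦanti : AntitoneOn Φ (Set.Ici (0:ℝ)))
    (hΦnonneg : ∀ x ∈ Set.Ici (0:ℝ), 0 ≤ Φ x)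
    (hΦγint : IntegrableOn (fun t : ℝ => Φ t ^ γ) (Set.Ioi (1/2 : ℝ)))
    {δ : ℝ → ℂ} (hδdom : ∀ x : ℝ, ‖δ x‖ ≤ Φ |x|)
    (x y : ℝ) {B : ℝ} (hB : 0 ≤ B)
    (hBbound : ∀ k : ℤ, ‖δ (x - k) - δ (y - k)‖ ≤ B) :
    Summable (fun k : ℤ => ‖δ (x - k) - δ (y - k)‖) ∧
      ∑' k : ℤ, ‖δ (x - k) - δ (y - k)‖ ≤
        B ^ (1 - γ) * (2 * (3 * Φ 0 ^ γ + 4 * ∫ t in Set.Ioi (1/2:ℝ), Φ t ^ γ)) := by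
  obtain ⟨hγ0, hγ1⟩ := hγ
  set ψ : ℝ → ℝ := fun t => Φ t ^ γ with hψ
  have hψanti : AntitoneOn ψ (Set.Ici (0:ℝ)) := fun a ha b hb hab =>
    Real.rpow_le_rpow (hΦnonneg b hb) (hΦanti ha hb hab) hγ0.le
  have hψnn : ∀ t ∈ Set.Ici (0:ℝ), 0 ≤ ψ t := fun t ht => Real.rpow_nonneg (hΦnonneg t ht) γ
  obtain ⟨hSx, hTx⟩ := int_sum hψanti hψnn hΦγint x
  obtain ⟨hSy, hTy⟩ := int_sum hψanti hψnn hΦγint y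
  have hψ0 : 0 ≤ ψ 0 := Real.rpow_nonneg (hΦnonneg 0 (Set.mem_Ici.mpr le_rfl)) γ
  have hInt : 0 ≤ ∫ t in Set.Ioi (1/2:ℝ), ψ t := by
    apply setIntegral_nonneg measurableSet_Ioi
    intro t ht
    exact Real.rpow_nonneg (hΦnonneg t (le_of_lt (lt_trans (by norm_num) (Set.mem_Ioi.mp ht)))) γ
  have hpt : ∀ k : ℤ, ‖δ (x - k) - δ (y - k)‖ ≤
      B ^ (1 - γ) * (ψ |x - k| + ψ |y - k|) := by
    intro k
    set a := ‖δ (x - k) - δ (y - k)‖ with ha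
    have ha0 : 0 ≤ a := norm_nonneg _
    have hRHSnn : 0 ≤ B ^ (1 - γ) * (ψ |x - k| + ψ |y - k|) := by
      apply mul_nonneg (Real.rpow_nonneg hB _)
      have := hψnn |x - (k:ℝ)| (Set.mem_Ici.mpr (abs_nonneg _))
      have := hψnn |y - (k:ℝ)| (Set.mem_Ici.mpr (abs_nonneg _))
      linarith
    rcases eq_or_lt_of_le ha0 with heq | hapos
    · rw [← heq]; exact hRHSnn
    · have hsplit : a = a ^ (1 - γ) * a ^ γ := by
        rw [← Real.rpow_add hapos]
        norm_num
      have h1 : a ^ (1 - γ) ≤ B ^ (1 - γ) :=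
        Real.rpow_le_rpow ha0 (hBbound k) (by linarith)
      have hΦx : 0 ≤ Φ |x - (k:ℝ)| := hΦnonneg _ (Set.mem_Ici.mpr (abs_nonneg _))
      have hΦy : 0 ≤ Φ |y - (k:ℝ)| := hΦnonneg _ (Set.mem_Ici.mpr (abs_nonneg _))
      have h2 : a ^ γ ≤ ψ |x - k| + ψ |y - k| := by
        have hd : a ≤ Φ |x - (k:ℝ)| + Φ |y - (k:ℝ)| := by
          calc a ≤ ‖δ (x - k)‖ + ‖δ (y - k)‖ := norm_sub_le _ _
            _ ≤ Φ |x - (k:ℝ)| + Φ |y - (k:ℝ)| := add_le_add (hδdom _) (hδdom _)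
        calc a ^ γ ≤ (Φ |x - (k:ℝ)| + Φ |y - (k:ℝ)|) ^ γ :=
              Real.rpow_le_rpow ha0 hd hγ0.le
          _ ≤ ψ |x - k| + ψ |y - k| := rpow_add_le' hΦx hΦy hγ0.le hγ1.le
      calc a = a ^ (1 - γ) * a ^ γ := hsplit
        _ ≤ B ^ (1 - γ) * (ψ |x - k| + ψ |y - k|) := by
            apply mul_le_mul h1 h2 (Real.rpow_nonneg ha0 γ) (Real.rpow_nonneg hB _)
  have hSrhs : Summable (fun k : ℤ => B ^ (1 - γ) * (ψ |x - k| + ψ |y - k|)) :=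
    (hSx.add hSy).mul_left _
  constructor
  · exact Summable.of_nonneg_of_le (fun k => norm_nonneg _) hpt hSrhs
  · calc ∑' k : ℤ, ‖δ (x - k) - δ (y - k)‖
        ≤ ∑' k : ℤ, B ^ (1 - γ) * (ψ |x - k| + ψ |y - k|) :=
          Summable.tsum_le_tsum hpt (Summable.of_nonneg_of_le (fun k => norm_nonneg _) hpt hSrhs) hSrhs
      _ = B ^ (1 - γ) * ((∑' k : ℤ, ψ |x - k|) + ∑' k : ℤ, ψ |y - k|) := by
          rw [tsum_mul_left, Summable.tsum_add hSx hSy]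
      _ ≤ B ^ (1 - γ) * (2 * (3 * ψ 0 + 4 * ∫ t in Set.Ioi (1/2:ℝ), ψ t)) := by
          apply mul_le_mul_of_nonneg_left _ (Real.rpow_nonneg hB _)
          linarith
      _ = B ^ (1 - γ) * (2 * (3 * Φ 0 ^ γ + 4 * ∫ t in Set.Ioi (1/2:ℝ), Φ t ^ γ)) := rfl


/-- Lemma 4.3: summed logarithmic modulus of continuity of the dyadic system
`δ_{jk}(x) = 2^{j/2} δ(2^j x − k)` when `δ = (1/2π)∫ e^{ixu} g(u) du` is dominated
by a monotone `Φ` and `g` has a finite logarithmic moment. -/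
theorem summed_dyadic_translates_log_modulus
    (γ α : ℝ) (hγ : γ ∈ Set.Ioo (0 : ℝ) 1) (hα : 0 < α)
    (Φ : ℝ → ℝ)
    (hΦanti : AntitoneOn Φ (Set.Ici (0 : ℝ)))
    (hΦnonneg : ∀ x ∈ Set.Ici (0 : ℝ), 0 ≤ Φ x)
    (hΦγint : IntegrableOn (fun t : ℝ => Φ t ^ γ) (Set.Ioi (1 / 2 : ℝ)))
    (g : ℝ → ℂ) (hg : Integrable g)
    (hglog : Integrable (fun u : ℝ => Real.log (1 + |u|) ^ α * ‖g u‖))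
    (δ : ℝ → ℂ)
    (hδ : ∀ x : ℝ, δ x =
      (1 / (2 * (Real.pi : ℂ))) * ∫ u : ℝ, Complex.exp (Complex.I * x * u) * g u)
    (hδdom : ∀ x : ℝ, ‖δ x‖ ≤ Φ |x|)
    (δjk : ℕ → ℤ → ℝ → ℂ)
    (hδjk : ∀ (j : ℕ) (k : ℤ) (x : ℝ),
      δjk j k x = (((2 : ℝ) ^ ((j : ℝ) / 2) : ℝ) : ℂ) * δ ((2 : ℝ) ^ j * x - (k : ℝ)))
    (R0 R1 M : ℝ)
    (hR0 : R0 = (1 / Real.pi) * ∫ u : ℝ, Real.log (Real.exp α + |u| / 2) ^ α * ‖g u‖)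
    (hR1 : R1 = (1 / Real.pi) * ∫ u : ℝ, Real.log (Real.exp α + |u| + 1) ^ α * ‖g u‖)
    (hM : M = 3 * Φ 0 ^ γ + 4 * ∫ t in Set.Ioi (1 / 2 : ℝ), Φ t ^ γ) :
    ∀ x y : ℝ, x ≠ y →
      (Summable (fun k : ℤ => ‖δjk 0 k x - δjk 0 k y‖) ∧
        ∑' k : ℤ, ‖δjk 0 k x - δjk 0 k y‖ ≤
          2 * R0 ^ (1 - γ) * M *
            Real.log (Real.exp α + 1 / |x - y|) ^ (-(α * (1 - γ)))) ∧
      ∀ j : ℕ, 1 ≤ j →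
        Summable (fun k : ℤ => ‖δjk j k x - δjk j k y‖) ∧
        ∑' k : ℤ, ‖δjk j k x - δjk j k y‖ ≤
          (2 : ℝ) ^ ((j : ℝ) / 2 + 1) * (j : ℝ) ^ (α * (1 - γ)) * R1 ^ (1 - γ) * M *
            Real.log (Real.exp α + 1 / |x - y|) ^ (-(α * (1 - γ))) := by
  intro x y hxy
  have hπ : (0:ℝ) < Real.pi := Real.pi_pos
  set h : ℝ := |x - y| with hhdef
  have hh : 0 < h := abs_pos.mpr (sub_ne_zero.mpr hxy)
  set L : ℝ := Real.log (Real.exp α + 1 / h) with hLdef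
  have hLα : α ≤ L := log_ge_alpha hα (by positivity)
  have hLpos : 0 < L := lt_of_lt_of_le hα hLα
  have hLneg_nn : 0 ≤ L ^ (-α) := Real.rpow_nonneg hLpos.le _
  have he1 : (1:ℝ) ≤ Real.exp α := Real.one_le_exp hα.le
  -- nonnegativity of R0, R1
  have hR0nn : 0 ≤ R0 := by
    rw [hR0]
    apply mul_nonneg (by positivity)
    apply integral_nonneg
    intro u
    exact mul_nonneg (Real.rpow_nonneg (Real.log_nonneg (by
      have := abs_nonneg u; linarith)) α) (norm_nonneg _)
  have hR1nn : 0 ≤ R1 := by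
    rw [hR1]
    apply mul_nonneg (by positivity)
    apply integral_nonneg
    intro u
    exact mul_nonneg (Real.rpow_nonneg (Real.log_nonneg (by
      have := abs_nonneg u; linarith)) α) (norm_nonneg _)
  -- integrability of the two weight functions
  have hJ0int : Integrable (fun u : ℝ => Real.log (Real.exp α + |u| / 2) ^ α * ‖g u‖) := by
    apply integrable_pow_log hα hg hglog
      (J := fun u : ℝ => Real.log (Real.exp α + |u| / 2)) (C := α)
    · apply continuous_log_comp (by continuity)
      intro u
      have := abs_nonneg u
      positivity
    · intro u
      apply Real.log_nonneg
      have := abs_nonneg u; linarith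
    · exact hα.le
    · intro u
      have habs := abs_nonneg u
      calc Real.log (Real.exp α + |u| / 2)
          ≤ Real.log (Real.exp α * (1 + |u|)) := by
            apply Real.log_le_log (by positivity)
            nlinarith
        _ = α + Real.log (1 + |u|) := by
            rw [Real.log_mul (by positivity) (by positivity), Real.log_exp]
  have hJ1int : Integrable (fun u : ℝ => Real.log (Real.exp α + |u| + 1) ^ α * ‖g u‖) := by
    apply integrable_pow_log hα hg hglog
      (J := fun u : ℝ => Real.log (Real.exp α + |u| + 1)) (C := α + Real.log 2)
    · apply continuous_log_comp (by continuity)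
      intro u
      have := abs_nonneg u
      positivity
    · intro u
      apply Real.log_nonneg
      have := abs_nonneg u; linarith
    · have : (0:ℝ) ≤ Real.log 2 := Real.log_nonneg (by norm_num)
      linarith
    · intro u
      have habs := abs_nonneg u
      calc Real.log (Real.exp α + |u| + 1)
          ≤ Real.log (2 * Real.exp α * (1 + |u|)) := by
            apply Real.log_le_log (by positivity)
            nlinarith
        _ = α + Real.log 2 + Real.log (1 + |u|) := by
            rw [Real.log_mul (by positivity) (by positivity),
              Real.log_mul (by norm_num) (Real.exp_ne_zero α), Real.log_exp]
            ring
  -- the exponent identity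
  have hexp_id : L ^ (-(α * (1 - γ))) = (L ^ (-α)) ^ (1 - γ) := by
    rw [← Real.rpow_mul hLpos.le]
    congr 1
    ring
  constructor
  · -- j = 0 case
    have heq0 : (fun k : ℤ => ‖δjk 0 k x - δjk 0 k y‖) =
        fun k : ℤ => ‖δ (x - k) - δ (y - k)‖ := by
      funext k
      rw [hδjk 0 k x, hδjk 0 k y]
      norm_num
    set B0 : ℝ := R0 * L ^ (-α) with hB0def
    have hB0nn : 0 ≤ B0 := mul_nonneg hR0nn hLneg_nn
    have hWint0 : Integrable (fun u : ℝ =>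
        (2 * Real.log (Real.exp α + |u| / 2) ^ α * L ^ (-α)) * ‖g u‖) := by
      have : (fun u : ℝ => (2 * Real.log (Real.exp α + |u| / 2) ^ α * L ^ (-α)) * ‖g u‖) =
          fun u : ℝ => (2 * L ^ (-α)) * (Real.log (Real.exp α + |u| / 2) ^ α * ‖g u‖) := by
        funext u; ring
      rw [this]
      exact hJ0int.const_mul _
    have hB0bound : ∀ k : ℤ, ‖δ (x - k) - δ (y - k)‖ ≤ B0 := by
      intro k
      have hosc := osc_bound hg hδ (x - k) (y - k)
        (fun u : ℝ => 2 * Real.log (Real.exp α + |u| / 2) ^ α * L ^ (-α))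
        (fun u => by
          have : (0:ℝ) ≤ Real.log (Real.exp α + |u| / 2) ^ α :=
            Real.rpow_nonneg (Real.log_nonneg (by have := abs_nonneg u; linarith)) α
          positivity)
        hWint0
        (fun u => by
          have harg : (x - (k:ℝ)) - (y - (k:ℝ)) = x - y := by ring
          rw [harg, ← hhdef]
          exact min_bound_zero hα hh u)
      refine le_trans hosc (le_of_eq ?_)
      have hIeq : ∫ u : ℝ, (2 * Real.log (Real.exp α + |u| / 2) ^ α * L ^ (-α)) * ‖g u‖ =
          (2 * L ^ (-α)) * ∫ u : ℝ, Real.log (Real.exp α + |u| / 2) ^ α * ‖g u‖ := by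
        rw [← integral_const_mul]
        congr 1
        funext u
        ring
      rw [hIeq, hB0def, hR0]
      field_simp
    obtain ⟨hsum0, htsum0⟩ := core_sum hγ hΦanti hΦnonneg hΦγint hδdom x y hB0nn hB0bound
    constructor
    · rw [heq0]; exact hsum0
    · rw [heq0]
      refine le_trans htsum0 (le_of_eq ?_)
      rw [← hM, hB0def, Real.mul_rpow hR0nn hLneg_nn, hexp_id]
      ring
  · -- j ≥ 1 case
    intro j hj
    set x' : ℝ := 2 ^ j * x with hx'
    set y' : ℝ := 2 ^ j * y with hy'
    have hdiff' : ∀ k : ℤ, (x' - (k:ℝ)) - (y' - (k:ℝ)) = (2:ℝ) ^ j * (x - y) := by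
      intro k; rw [hx', hy']; ring
    have habs' : |(2:ℝ) ^ j * (x - y)| = 2 ^ j * h := by
      rw [abs_mul, abs_of_pos (by positivity), hhdef]
    have hjR : (0:ℝ) ≤ (j:ℝ) := Nat.cast_nonneg j
    have hc : (0:ℝ) < (2:ℝ) ^ ((j:ℝ) / 2) := Real.rpow_pos_of_pos (by norm_num) _
    have heqj : (fun k : ℤ => ‖δjk j k x - δjk j k y‖) =
        fun k : ℤ => (2:ℝ) ^ ((j:ℝ) / 2) * ‖δ (x' - k) - δ (y' - k)‖ := by
      funext k
      rw [hδjk j k x, hδjk j k y, ← mul_sub, norm_mul]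
      congr 1
      rw [Complex.norm_real, Real.norm_eq_abs, abs_of_pos hc]
    set B1 : ℝ := (j:ℝ) ^ α * (R1 * L ^ (-α)) with hB1def
    have hjα_nn : (0:ℝ) ≤ (j:ℝ) ^ α := Real.rpow_nonneg hjR α
    have hB1nn : 0 ≤ B1 := mul_nonneg hjα_nn (mul_nonneg hR1nn hLneg_nn)
    have hWint1 : Integrable (fun u : ℝ =>
        (2 * (j:ℝ) ^ α * Real.log (Real.exp α + |u| + 1) ^ α * L ^ (-α)) * ‖g u‖) := by
      have : (fun u : ℝ =>
          (2 * (j:ℝ) ^ α * Real.log (Real.exp α + |u| + 1) ^ α * L ^ (-α)) * ‖g u‖) =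
          fun u : ℝ => (2 * (j:ℝ) ^ α * L ^ (-α)) *
            (Real.log (Real.exp α + |u| + 1) ^ α * ‖g u‖) := by
        funext u; ring
      rw [this]
      exact hJ1int.const_mul _
    have hB1bound : ∀ k : ℤ, ‖δ (x' - k) - δ (y' - k)‖ ≤ B1 := by
      intro k
      have hosc := osc_bound hg hδ (x' - k) (y' - k)
        (fun u : ℝ => 2 * (j:ℝ) ^ α * Real.log (Real.exp α + |u| + 1) ^ α * L ^ (-α))
        (fun u => by
          have : (0:ℝ) ≤ Real.log (Real.exp α + |u| + 1) ^ α :=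
            Real.rpow_nonneg (Real.log_nonneg (by have := abs_nonneg u; linarith)) α
          positivity)
        hWint1
        (fun u => by
          rw [hdiff' k, habs']
          exact min_bound_j hα hh j hj u)
      refine le_trans hosc (le_of_eq ?_)
      have hIeq : ∫ u : ℝ,
          (2 * (j:ℝ) ^ α * Real.log (Real.exp α + |u| + 1) ^ α * L ^ (-α)) * ‖g u‖ =
          (2 * (j:ℝ) ^ α * L ^ (-α)) *
            ∫ u : ℝ, Real.log (Real.exp α + |u| + 1) ^ α * ‖g u‖ := by
        rw [← integral_const_mul]
        congr 1
        funext u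
        ring
      rw [hIeq, hB1def, hR1]
      field_simp
    obtain ⟨hsum1, htsum1⟩ := core_sum hγ hΦanti hΦnonneg hΦγint hδdom x' y' hB1nn hB1bound
    constructor
    · rw [heqj]
      exact hsum1.mul_left _
    · rw [heqj, tsum_mul_left]
      calc (2:ℝ) ^ ((j:ℝ) / 2) * ∑' k : ℤ, ‖δ (x' - k) - δ (y' - k)‖
          ≤ (2:ℝ) ^ ((j:ℝ) / 2) * (B1 ^ (1 - γ) *
              (2 * (3 * Φ 0 ^ γ + 4 * ∫ t in Set.Ioi (1/2:ℝ), Φ t ^ γ))) :=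
            mul_le_mul_of_nonneg_left htsum1 hc.le
        _ = (2:ℝ) ^ ((j:ℝ) / 2 + 1) * (j:ℝ) ^ (α * (1 - γ)) * R1 ^ (1 - γ) * M *
              L ^ (-(α * (1 - γ))) := by
            rw [← hM, hB1def, Real.mul_rpow hjα_nn (mul_nonneg hR1nn hLneg_nn),
              Real.mul_rpow hR1nn hLneg_nn, hexp_id,
              ← Real.rpow_mul hjR, Real.rpow_add_one (by norm_num : (2:ℝ) ≠ 0)]
            ring
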